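/- Define the Brown–von Neumann–Nash (BNN) vector field on the product of simplices X = ∏_i Δ_{S_i} for a finite game with utility functions u_i, by, for each player i and strategy a ∈ S_i: β_i^a(x) = [u_i(a, x_{−i}) − ū_i(x)]₊ − x_i^a · Σ_{b∈S_i} [u_i(b, x_{−i}) − ū_i(x)]₊, where ū_i(x) = Σ_b x_i^b u_i(b, x_{−i}) and [t]₊ = max(t, 0). Then x ∈ X is a zero of β (i.e. β_i^a(x) = 0 for all i, a) if and only if x is a Nash equilibrium of the game. -/

import Mathlib

open Finset

/-- Expected value of a pure-profile payoff `U` under the (product of the) mixed profile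
`x`, i.e. `∑_s (∏_j x_j(s_j)) · U(s)`. -/
noncomputable def expPay {p : ℕ} {S : Fin p → Type*} [∀ i, Fintype (S i)]
    (U : (∀ i, S i) → ℝ) (x : ∀ i, S i → ℝ) : ℝ :=
  ∑ s : (∀ i, S i), (∏ j, x j (s j)) * U s

/-- `u_i(a, x_{−i})`: expected payoff to the pure-profile payoff `U` when player `i` plays
the pure strategy `a` and the others play according to `x`. -/
noncomputable def pureDevPay {p : ℕ} {S : Fin p → Type*} [∀ i, Fintype (S i)]
    [∀ i, DecidableEq (S i)] (U : (∀ i, S i) → ℝ) (x : ∀ i, S i → ℝ)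
    (i : Fin p) (a : S i) : ℝ :=
  expPay U (Function.update x i (fun b => if b = a then (1 : ℝ) else 0))

/-- The Brown–von Neumann–Nash vector field:
`β_i^a(x) = [u_i(a,x_{−i}) − ū_i(x)]₊ − x_i^a · Σ_b [u_i(b,x_{−i}) − ū_i(x)]₊`. -/
noncomputable def bnn {p : ℕ} {S : Fin p → Type*} [∀ i, Fintype (S i)]
    [∀ i, DecidableEq (S i)] (U : ∀ _ : Fin p, (∀ i, S i) → ℝ)
    (x : ∀ i, S i → ℝ) (i : Fin p) (a : S i) : ℝ :=
  max (pureDevPay (U i) x i a - expPay (U i) x) 0 -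
    x i a * ∑ b : S i, max (pureDevPay (U i) x i b - expPay (U i) x) 0

lemma sum_weight_pureDevPay {p : ℕ} {S : Fin p → Type*} [∀ i, Fintype (S i)]
    [∀ i, DecidableEq (S i)] (U : (∀ i, S i) → ℝ) (x : ∀ i, S i → ℝ) (i : Fin p) :
    ∑ a : S i, x i a * pureDevPay U x i a = expPay U x := by
  simp only [pureDevPay, expPay, Finset.mul_sum]
  rw [Finset.sum_comm]
  refine Finset.sum_congr rfl fun s _ => ?_
  have key : ∀ a : S i,
      (∏ j, (Function.update x i (fun b => if b = a then (1:ℝ) else 0)) j (s j))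
        = (if s i = a then (1:ℝ) else 0) * ∏ j ∈ Finset.univ.erase i, x j (s j) := by
    intro a
    rw [← Finset.mul_prod_erase Finset.univ _ (Finset.mem_univ i)]
    congr 1
    · rw [Function.update_self]
    · exact Finset.prod_congr rfl fun j hj => by
        rw [Function.update_of_ne (Finset.mem_erase.mp hj).1]
  simp only [key]
  have step : ∀ a : S i,
      x i a * (((if s i = a then (1:ℝ) else 0) * ∏ j ∈ Finset.univ.erase i, x j (s j)) * U s)
        = if s i = a then x i a * ((∏ j ∈ Finset.univ.erase i, x j (s j)) * U s) else 0 := by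
    intro a; by_cases h : s i = a <;> simp [h]
  rw [Finset.sum_congr rfl fun a _ => step a, Finset.sum_ite_eq, if_pos (Finset.mem_univ _),
    ← Finset.mul_prod_erase Finset.univ (fun j => x j (s j)) (Finset.mem_univ i)]
  ring

/-- **Zeros of the BNN field are exactly the Nash equilibria.** For a finite game with
pure payoffs `U i` and a mixed profile `x` (each `x i` in the simplex), the BNN field
vanishes at `x` if and only if `x` is a Nash equilibrium, i.e.
`u_i(a, x_{−i}) ≤ ū_i(x)` for every player `i` and strategy `a`. -/
theorem bnn_zero_iff_nash (p : ℕ) (S : Fin p → Type*) [∀ i, Fintype (S i)]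
    [∀ i, DecidableEq (S i)] [∀ i, Nonempty (S i)]
    (U : ∀ _ : Fin p, (∀ i, S i) → ℝ)
    (x : ∀ i, S i → ℝ) (hx : ∀ i, x i ∈ stdSimplex ℝ (S i)) :
    (∀ (i : Fin p) (a : S i), bnn U x i a = 0) ↔
    (∀ (i : Fin p) (a : S i), pureDevPay (U i) x i a ≤ expPay (U i) x) := by
  constructor
  · intro h i a
    set e : S i → ℝ := fun b => pureDevPay (U i) x i b - expPay (U i) x with he
    set T : ℝ := ∑ b : S i, max (e b) 0 with hT
    have hz : ∀ b : S i, max (e b) 0 = x i b * T := by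
      intro b
      have := h i b
      simp only [bnn, sub_eq_zero] at this
      exact this
    have hxnn : ∀ b : S i, 0 ≤ x i b := (hx i).1
    have hxsum : ∑ b : S i, x i b = 1 := (hx i).2
    have hTnn : 0 ≤ T := Finset.sum_nonneg fun b _ => le_max_right _ _
    have hT0 : T = 0 := by
      by_contra hTne
      have hTpos : 0 < T := lt_of_le_of_ne hTnn (Ne.symm hTne)
      have hsum0 : ∑ b : S i, x i b * e b = 0 := by
        simp only [he, mul_sub]
        rw [Finset.sum_sub_distrib, sum_weight_pureDevPay, ← Finset.sum_mul, hxsum, one_mul,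
          sub_self]
      have hterm : ∀ b : S i, x i b * e b = (max (e b) 0) ^ 2 / T := by
        intro b
        have hxb : x i b = max (e b) 0 / T := by
          field_simp [hz b]
          exact (hz b).symm
        rw [hxb]
        rcases le_or_gt (e b) 0 with hb | hb
        · simp [max_eq_right hb]
        · rw [max_eq_left hb.le]; ring
      rw [Finset.sum_congr rfl fun b _ => hterm b] at hsum0
      have hall : ∀ b ∈ Finset.univ, (max (e b) 0) ^ 2 / T = 0 := by
        refine (Finset.sum_eq_zero_iff_of_nonneg fun b _ => ?_).mp hsum0
        positivity
      have : T = 0 := by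
        rw [hT]
        refine Finset.sum_eq_zero fun b _ => ?_
        have := hall b (Finset.mem_univ b)
        have h2 : (max (e b) 0) ^ 2 = 0 := by
          rcases div_eq_zero_iff.mp this with h2 | h2
          · exact h2
          · exact absurd h2 hTne
        exact pow_eq_zero_iff (by norm_num) |>.mp h2
      exact hTne this
    have : max (e a) 0 = 0 := by rw [hz a, hT0, mul_zero]
    have := le_of_max_le_left this.le
    simpa [he, sub_nonpos] using this
  · intro h i a
    have hm : ∀ b : S i, max (pureDevPay (U i) x i b - expPay (U i) x) 0 = 0 := fun b =>
      max_eq_right (sub_nonpos.mpr (h i b))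
    simp [bnn, hm]
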